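/- Let G be an undirected graph with node capacities, let f be a flow from s to t decomposed into unit-flow paths, and suppose every s-t path in G either passes through a designated set S of nodes of capacity 1 (with s,t ∉ S) or uses only edges consistent with an orientation D of G. Then the value of f is at most |S| plus the maximum st-flow value of the directed node-capacitated graph D. -/

import Mathlib

private lemma list_length_le_sum' {α : Type*} (l : List α) (f : α → ℕ)
    (h : ∀ a ∈ l, 1 ≤ f a) : l.length ≤ (l.map f).sum := by
  induction l with
  | nil => simp
  | cons a l ih =>
    simp only [List.length_cons, List.map_cons, List.sum_cons]
    have h1 := h a (by simp)
    have h2 := ih (fun b hb => h b (by simp [hb]))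
    omega

private lemma sum_map_finset_sum' {α β : Type*} (l : List α) (S : Finset β)
    (f : β → α → ℕ) :
    (l.map (fun p => ∑ v ∈ S, f v p)).sum = ∑ v ∈ S, (l.map (f v)).sum := by
  induction l with
  | nil => simp
  | cons a l ih => simp [ih, Finset.sum_add_distrib]

private lemma sublist_sum_le' (l₁ l₂ : List ℕ) (h : l₁.Sublist l₂) :
    l₁.sum ≤ l₂.sum := by
  induction h with
  | slnil => simp
  | cons a _ ih => simp; omega
  | cons_cons a _ ih => simp; omega

private lemma filter_length_split' {α : Type*} (l : List α) (q : α → Bool) :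
    l.length = (l.filter q).length + (l.filter (fun a => !q a)).length := by
  induction l with
  | nil => simp
  | cons a l ih => by_cases h : q a <;> simp [h, ih] <;> omega

/-- Let `G` be an undirected node-capacitated graph, `f` an `s`-`t` flow
decomposed into unit-flow simple paths (a list `L` of paths feasible w.r.t. the node
capacities at intermediate nodes), `S` a set of capacity-1 nodes with `s, t ∉ S`, and
`D` an orientation of (part of) `G`.  If every path of `f` either passes through `S`
or uses only edges consistent with `D`, then the value of `f` is at most `|S|` plus
any upper bound `M` on the value of node-capacitated `s`-`t` flows of the directed
graph `D` — in particular at most `|S|` plus the maximum `st`-flow value of `D`. -/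
theorem stmt_13 {V : Type*} [Fintype V] [DecidableEq V] (G : SimpleGraph V)
    (cap : V → ℕ) (s t : V) (hst : s ≠ t)
    (S : Finset V) (hs : s ∉ S) (ht : t ∉ S) (hcapS : ∀ v ∈ S, cap v = 1)
    (D : V → V → Prop) (hD : ∀ a b, D a b → G.Adj a b)
    (L : List (G.Walk s t)) (hpath : ∀ p ∈ L, p.IsPath)
    (hfeas : ∀ v, v ≠ s → v ≠ t →
      (L.map (fun p => p.support.count v)).sum ≤ cap v)
    (hsplit : ∀ p ∈ L, (∃ x ∈ p.support, x ∈ S) ∨ (∀ d ∈ p.darts, D d.fst d.snd))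
    (M : ℕ)
    (hM : ∀ L' : List (G.Walk s t), (∀ p ∈ L', p.IsPath) →
      (∀ p ∈ L', ∀ d ∈ p.darts, D d.fst d.snd) →
      (∀ v, v ≠ s → v ≠ t →
        (L'.map (fun p => p.support.count v)).sum ≤ cap v) →
      L'.length ≤ M) :
    L.length ≤ S.card + M := by
  classical
  set q : G.Walk s t → Bool := fun p => p.support.any (fun x => decide (x ∈ S)) with hq
  set L1 := L.filter q with hL1
  set L2 := L.filter (fun p => !q p) with hL2
  have hlen : L.length = L1.length + L2.length := filter_length_split' L q
  -- L2 bound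
  have hL2sub : ∀ v : V, (L2.map (fun p => p.support.count v)).Sublist
      (L.map (fun p => p.support.count v)) := fun v =>
    (List.filter_sublist (l := L)).map _
  have hL2le : L2.length ≤ M := by
    apply hM
    · exact fun p hp => hpath p (List.mem_of_mem_filter hp)
    · intro p hp d hd
      have hpL := List.mem_of_mem_filter hp
      have hqf : q p = false := by
        have := List.of_mem_filter hp
        simpa using this
      rcases hsplit p hpL with h | h
      · exfalso
        obtain ⟨x, hx, hxS⟩ := h
        have : q p = true := by
          simp [hq, List.any_eq_true]
          exact ⟨x, hx, hxS⟩
        simp [this] at hqf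
      · exact h d hd
    · intro v hvs hvt
      exact le_trans (sublist_sum_le' _ _ (hL2sub v)) (hfeas v hvs hvt)
  -- L1 bound
  have hL1le : L1.length ≤ S.card := by
    have h1 : L1.length ≤ (L1.map (fun p => ∑ v ∈ S, p.support.count v)).sum := by
      apply list_length_le_sum'
      intro p hp
      have hqt : q p = true := List.of_mem_filter hp
      simp only [hq, List.any_eq_true, decide_eq_true_eq] at hqt
      obtain ⟨x, hx, hxS⟩ := hqt
      calc 1 ≤ p.support.count x := List.one_le_count_iff.mpr hx
        _ ≤ ∑ v ∈ S, p.support.count v :=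
          Finset.single_le_sum (f := fun v => p.support.count v) (fun _ _ => Nat.zero_le _) hxS
    rw [sum_map_finset_sum'] at h1
    have h2 : ∑ v ∈ S, (L1.map (fun p => p.support.count v)).sum ≤ S.card := by
      have := Finset.sum_le_sum (s := S)
        (g := fun _ => 1) (f := fun v => (L1.map (fun p => p.support.count v)).sum) ?_
      · simpa using this
      intro v hv
      have hvs : v ≠ s := fun h => hs (h ▸ hv)
      have hvt : v ≠ t := fun h => ht (h ▸ hv)
      have : (L1.map (fun p => p.support.count v)).Sublist
          (L.map (fun p => p.support.count v)) := (List.filter_sublist (l := L)).map _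
      calc (L1.map (fun p => p.support.count v)).sum
          ≤ (L.map (fun p => p.support.count v)).sum := sublist_sum_le' _ _ this
        _ ≤ cap v := hfeas v hvs hvt
        _ = 1 := hcapS v hv
    omega
  omega
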